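/- Fix a horizon H ≥ 2, a damage rate κ > 0, a reward exponent β ∈ (0,1], and effort levels 0 < e_L < e_H ≤ 1 with κ·H·e_H ≤ 1. Let V(d) = 2^{−(H−1)} ∑_{e ∈ {e_L,e_H}^{H−1}} G_e(d) be the continuation value under the uniform policy, and let ē_β = (e_L^β + e_H^β)/2. Then |V(κ e_H) − V(κ e_L)| ≤ 2(H−1)·ē_β·κ·(e_H − e_L). -/

import Mathlib

/-- Continuation return along effort sequence `e` from initial damage `d`. -/
noncomputable def contReturn (H : ℕ) (κ β : ℝ) (e : ℕ → ℝ) (d : ℝ) : ℝ :=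
  ∑ t ∈ Finset.range (H - 1),
    (e t) ^ β * (1 - (d + κ * ∑ s ∈ Finset.range t, e s)) ^ 2

/-- Uniform-policy continuation value: the average of `contReturn` over all
`2^(H-1)` effort sequences with values in `{eL, eH}`, encoded by
`c : Fin (H-1) → Bool` (`true ↦ eH`, `false ↦ eL`). -/
noncomputable def contValue (H : ℕ) (κ β eL eH : ℝ) (d : ℝ) : ℝ :=
  (2 : ℝ) ^ (-((H : ℤ) - 1)) *
    ∑ c : Fin (H - 1) → Bool,
      contReturn H κ β
        (fun t => if ht : t < H - 1 then (if c ⟨t, ht⟩ then eH else eL) else 0) d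

lemma sum_pi_bool {n : ℕ} (i : Fin n) (g : Bool → ℝ) :
    ∑ c : Fin n → Bool, g (c i) = 2 ^ (n - 1) * (g false + g true) := by
  refine (Fintype.sum_equiv (Equiv.funSplitAt i Bool) _ (fun p => g p.1)
    (fun c => rfl)).trans ?_
  rw [Fintype.sum_prod_type]
  have hcard : Fintype.card ({ j : Fin n // j ≠ i } → Bool) = 2 ^ (n - 1) := by
    rw [Fintype.card_fun]
    congr 1
    simp [Fintype.card_subtype_compl]
  simp [Finset.sum_const, hcard, Finset.card_univ]
  ring

lemma sq_diff_bound (a b Δ : ℝ) (ha0 : 0 ≤ a) (ha1 : a ≤ 1) (hb0 : 0 ≤ b)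
    (hb1 : b ≤ 1) (hab : a - b = Δ) (hΔ : 0 ≤ Δ) :
    |(1 - a) ^ 2 - (1 - b) ^ 2| ≤ 2 * Δ := by
  have hd : (1 - a) ^ 2 - (1 - b) ^ 2 = -((a - b) * (2 - a - b)) := by ring
  have h3 : 0 ≤ 2 - a - b := by linarith
  have h4 : 2 - a - b ≤ 2 := by linarith
  rw [abs_le, hd, hab]
  constructor
  · nlinarith [mul_le_mul_of_nonneg_left h4 hΔ]
  · nlinarith [mul_nonneg hΔ h3]

lemma contReturn_lip (H : ℕ) (hH : 2 ≤ H) (κ β eL eH : ℝ)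
    (hκ : 0 < κ) (heL : 0 < eL) (hLH : eL < eH) (heH : eH ≤ 1)
    (hbound : κ * (H : ℝ) * eH ≤ 1) (e : ℕ → ℝ)
    (he : ∀ t, t < H - 1 → eL ≤ e t ∧ e t ≤ eH) :
    |contReturn H κ β e (κ * eH) - contReturn H κ β e (κ * eL)| ≤
      ∑ t ∈ Finset.range (H - 1), (e t) ^ β * (2 * κ * (eH - eL)) := by
  unfold contReturn
  rw [← Finset.sum_sub_distrib]
  refine (Finset.abs_sum_le_sum_abs _ _).trans (Finset.sum_le_sum ?_)
  intro t ht
  rw [Finset.mem_range] at ht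
  have hEt : 0 < e t := lt_of_lt_of_le heL (he t ht).1
  have hS0 : 0 ≤ ∑ s ∈ Finset.range t, e s :=
    Finset.sum_nonneg fun s hs => le_of_lt (lt_of_lt_of_le heL
      (he s (lt_of_le_of_lt (le_of_lt (Finset.mem_range.mp hs)) ht)).1)
  have hSle : (∑ s ∈ Finset.range t, e s) ≤ t * eH := by
    have := Finset.sum_le_sum (s := Finset.range t) (f := e) (g := fun _ => eH)
      (fun s hs => (he s (lt_of_le_of_lt (le_of_lt (Finset.mem_range.mp hs)) ht)).2)
    simpa using this
  have htH : (t : ℝ) + 1 ≤ (H : ℝ) := by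
    have : t + 1 ≤ H := by omega
    exact_mod_cast this
  have hkeH : 0 ≤ κ * eH := le_of_lt (mul_pos hκ (lt_trans heL hLH))
  have ha1 : κ * eH + κ * (∑ s ∈ Finset.range t, e s) ≤ 1 := by
    have h1 : κ * (∑ s ∈ Finset.range t, e s) ≤ κ * ((t : ℝ) * eH) :=
      mul_le_mul_of_nonneg_left hSle (le_of_lt hκ)
    have h3 : κ * eH * ((t : ℝ) + 1) ≤ κ * eH * (H : ℝ) :=
      mul_le_mul_of_nonneg_left htH hkeH
    nlinarith
  have ha0 : 0 ≤ κ * eH + κ * (∑ s ∈ Finset.range t, e s) := by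
    have := mul_nonneg (le_of_lt hκ) hS0
    linarith
  have hb0 : 0 ≤ κ * eL + κ * (∑ s ∈ Finset.range t, e s) := by
    have := mul_nonneg (le_of_lt hκ) hS0
    nlinarith
  have hb1 : κ * eL + κ * (∑ s ∈ Finset.range t, e s) ≤ 1 := by nlinarith
  have hterm : e t ^ β * (1 - (κ * eH + κ * ∑ s ∈ Finset.range t, e s)) ^ 2 -
      e t ^ β * (1 - (κ * eL + κ * ∑ s ∈ Finset.range t, e s)) ^ 2 =
      e t ^ β * ((1 - (κ * eH + κ * ∑ s ∈ Finset.range t, e s)) ^ 2 -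
        (1 - (κ * eL + κ * ∑ s ∈ Finset.range t, e s)) ^ 2) := by ring
  rw [hterm, abs_mul, abs_of_nonneg (Real.rpow_nonneg (le_of_lt hEt) β)]
  refine mul_le_mul_of_nonneg_left ?_ (Real.rpow_nonneg (le_of_lt hEt) β)
  have := sq_diff_bound _ _ (κ * (eH - eL)) ha0 ha1 hb0 hb1 (by ring) (by nlinarith)
  linarith

theorem stmt_1 (H : ℕ) (hH : 2 ≤ H) (κ β eL eH : ℝ)
    (hκ : 0 < κ) (hβ0 : 0 < β) (hβ1 : β ≤ 1)
    (heL : 0 < eL) (hLH : eL < eH) (heH : eH ≤ 1)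
    (hbound : κ * (H : ℝ) * eH ≤ 1) :
    |contValue H κ β eL eH (κ * eH) - contValue H κ β eL eH (κ * eL)| ≤
      2 * ((H : ℝ) - 1) * ((eL ^ β + eH ^ β) / 2) * κ * (eH - eL) := by
  have hn1 : 1 ≤ H - 1 := by omega
  have hHn : (H : ℝ) - 1 = ((H - 1 : ℕ) : ℝ) := by
    push_cast [Nat.cast_sub (by omega : 1 ≤ H)]
    ring
  have key : ∀ c : Fin (H - 1) → Bool,
      |contReturn H κ β
          (fun t => if ht : t < H - 1 then (if c ⟨t, ht⟩ then eH else eL) else 0) (κ * eH) -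
        contReturn H κ β
          (fun t => if ht : t < H - 1 then (if c ⟨t, ht⟩ then eH else eL) else 0) (κ * eL)| ≤
        ∑ t ∈ Finset.range (H - 1),
          (if ht : t < H - 1 then (if c ⟨t, ht⟩ then eH else eL) else 0) ^ β *
            (2 * κ * (eH - eL)) := by
    intro c
    refine contReturn_lip H hH κ β eL eH hκ heL hLH heH hbound _ ?_
    intro t ht
    simp only [dif_pos ht]
    cases c ⟨t, ht⟩ <;> simp [le_of_lt hLH]
  unfold contValue
  rw [← mul_sub, ← Finset.sum_sub_distrib, abs_mul]
  have h2pos : (0:ℝ) < (2 : ℝ) ^ (-((H : ℤ) - 1)) := by positivity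
  rw [abs_of_pos h2pos]
  have hsum : |∑ c : Fin (H - 1) → Bool,
      (contReturn H κ β
          (fun t => if ht : t < H - 1 then (if c ⟨t, ht⟩ then eH else eL) else 0) (κ * eH) -
        contReturn H κ β
          (fun t => if ht : t < H - 1 then (if c ⟨t, ht⟩ then eH else eL) else 0) (κ * eL))| ≤
      ((H - 1 : ℕ) : ℝ) * 2 ^ (H - 1 - 1) * (eL ^ β + eH ^ β) * (2 * κ * (eH - eL)) := by
    refine (Finset.abs_sum_le_sum_abs _ _).trans ?_
    refine (Finset.sum_le_sum fun c _ => key c).trans ?_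
    rw [Finset.sum_comm]
    have heach : ∀ t ∈ Finset.range (H - 1),
        (∑ c : Fin (H - 1) → Bool,
            (if ht : t < H - 1 then (if c ⟨t, ht⟩ then eH else eL) else 0) ^ β *
              (2 * κ * (eH - eL))) =
          2 ^ (H - 1 - 1) * (eL ^ β + eH ^ β) * (2 * κ * (eH - eL)) := by
      intro t ht
      rw [Finset.mem_range] at ht
      have : ∀ c : Fin (H - 1) → Bool,
          (if ht' : t < H - 1 then (if c ⟨t, ht'⟩ then eH else eL) else 0) ^ β *
              (2 * κ * (eH - eL)) =
            (fun bo : Bool => (if bo then eH else eL) ^ β * (2 * κ * (eH - eL)))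
              (c ⟨t, ht⟩) := by
        intro c; simp only [dif_pos ht]
      rw [Finset.sum_congr rfl fun c _ => this c,
        sum_pi_bool (⟨t, ht⟩ : Fin (H - 1))
          (fun bo => (if bo then eH else eL) ^ β * (2 * κ * (eH - eL)))]
      norm_num
      ring
    rw [Finset.sum_congr rfl heach, Finset.sum_const, Finset.card_range, nsmul_eq_mul]
    apply le_of_eq; ring
  refine (mul_le_mul_of_nonneg_left hsum (le_of_lt h2pos)).trans (le_of_eq ?_)
  have hzpow : ((H : ℤ) - 1) = ((H - 1 : ℕ) : ℤ) := by omega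
  have h2 : (2:ℝ) ^ (-((H : ℤ) - 1)) = ((2:ℝ) ^ (H - 1))⁻¹ := by
    rw [hzpow, zpow_neg, zpow_natCast]
  have hpow : (2:ℝ) ^ (H - 1) = 2 * 2 ^ (H - 1 - 1) := by
    conv_lhs => rw [show H - 1 = (H - 1 - 1) + 1 by omega]
    rw [pow_succ]; ring
  rw [h2, hpow, hHn]
  have hne : ((2:ℝ) ^ (H - 1 - 1)) ≠ 0 := by positivity
  field_simp
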